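/- For any 3-SAT formula Γ, every defeasible theory based on the rule set R_Γ obtained by the Γ-transformation is decisive (for every literal p either +∂ p or −∂ p is derivable), because the atom dependency graph of R_Γ is acyclic. -/
import Mathlib


namespace DL

abbrev Atom := ℕ

/-- A literal: an atom with a polarity. -/
structure Lit where
  atom : Atom
  pos : Bool
deriving DecidableEq

/-- The complement `∼p` of a literal. -/
def Lit.neg (l : Lit) : Lit := ⟨l.atom, !l.pos⟩

/-- A defeasible rule: a finite set of antecedent literals and a head literal. -/
structure Rule where
  ante : Finset Lit
  head : Lit
deriving DecidableEq

/-- A defeasible theory: facts, defeasible rules, and a superiority relation. -/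
structure DTheory where
  facts : Finset Lit
  rules : Finset Rule
  sup : Rule → Rule → Prop

/-- A superiority relation is acyclic iff its transitive closure is irreflexive. -/
def Acyclic (sup : Rule → Rule → Prop) : Prop :=
  Irreflexive (Relation.TransGen sup)

def DTheory.FactsConsistent (D : DTheory) : Prop :=
  ∀ l ∈ D.facts, l.neg ∉ D.facts

/-- Well-formedness of a defeasible theory: consistent facts, acyclic superiority
relation defined on the rules of the theory. -/
def DTheory.WellFormed (D : DTheory) : Prop :=
  D.FactsConsistent ∧ Acyclic D.sup ∧ ∀ r s, D.sup r s → r ∈ D.rules ∧ s ∈ D.rules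

/-- Proof tags: Δ, Σ, σ, ω, φ, ∂. -/
inductive Tag | delta | Sig | sgm | omg | phi | prt
deriving DecidableEq

/-- A tagged literal: a tag, a sign (`true` = `+`, `false` = `−`), and a literal. -/
abbrev TLit := Tag × Bool × Lit

/-- The proof conditions of Defeasible Logic (defeasible rules only), relative to
the preceding part `P` of a proof sequence. -/
def Cond (D : DTheory) (P : List TLit) : Tag → Bool → Lit → Prop
  | .delta, true, q => q ∈ D.facts
  | .delta, false, q => q ∉ D.facts
  | .Sig, true, q =>
      (Tag.delta, true, q) ∈ P ∨
      ∃ r ∈ D.rules, r.head = q ∧ ∀ a ∈ r.ante, (Tag.Sig, true, a) ∈ P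
  | .Sig, false, q =>
      (Tag.delta, true, q) ∉ P ∧
      ∀ r ∈ D.rules, r.head = q → ∃ a ∈ r.ante, (Tag.Sig, false, a) ∈ P
  | .sgm, true, q =>
      (Tag.delta, true, q) ∈ P ∨
      ∃ r ∈ D.rules, r.head = q ∧ (∀ a ∈ r.ante, (Tag.sgm, true, a) ∈ P) ∧
        ∀ s ∈ D.rules, s.head = q.neg →
          (∃ a ∈ s.ante, (Tag.prt, false, a) ∈ P) ∨ ¬ D.sup s r
  | .sgm, false, q =>
      (Tag.delta, true, q) ∉ P ∧
      ∀ r ∈ D.rules, r.head = q →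
        (∃ a ∈ r.ante, (Tag.sgm, false, a) ∈ P) ∨
        ∃ s ∈ D.rules, s.head = q.neg ∧ (∀ a ∈ s.ante, (Tag.prt, true, a) ∈ P) ∧ D.sup s r
  | .omg, true, q =>
      (Tag.delta, true, q) ∈ P ∨
      ∃ r ∈ D.rules, r.head = q ∧ ∀ a ∈ r.ante, (Tag.prt, true, a) ∈ P
  | .omg, false, q =>
      (Tag.delta, true, q) ∉ P ∧
      ∀ r ∈ D.rules, r.head = q → ∃ a ∈ r.ante, (Tag.prt, false, a) ∈ P
  | .phi, true, q =>
      (Tag.delta, true, q) ∈ P ∨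
      ∃ r ∈ D.rules, r.head = q ∧ (∀ a ∈ r.ante, (Tag.phi, true, a) ∈ P) ∧
        ∀ s ∈ D.rules, s.head = q.neg → ∃ a ∈ s.ante, (Tag.Sig, false, a) ∈ P
  | .phi, false, q =>
      (Tag.delta, true, q) ∉ P ∧
      ∀ r ∈ D.rules, r.head = q →
        (∃ a ∈ r.ante, (Tag.phi, false, a) ∈ P) ∨
        ∃ s ∈ D.rules, s.head = q.neg ∧ ∀ a ∈ s.ante, (Tag.Sig, true, a) ∈ P
  | .prt, true, q =>
      (Tag.delta, true, q) ∈ P ∨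
      ((Tag.delta, false, q.neg) ∈ P ∧
       (∃ r ∈ D.rules, r.head = q ∧ ∀ a ∈ r.ante, (Tag.prt, true, a) ∈ P) ∧
       ∀ s ∈ D.rules, s.head = q.neg →
         (∃ a ∈ s.ante, (Tag.prt, false, a) ∈ P) ∨
         ∃ t ∈ D.rules, t.head = q ∧ (∀ a ∈ t.ante, (Tag.prt, true, a) ∈ P) ∧ D.sup t s)
  | .prt, false, q =>
      (Tag.delta, true, q) ∉ P ∧
      ((Tag.delta, true, q.neg) ∈ P ∨
       (∀ r ∈ D.rules, r.head = q → ∃ a ∈ r.ante, (Tag.prt, false, a) ∈ P) ∨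
       ∃ s ∈ D.rules, s.head = q.neg ∧ (∀ a ∈ s.ante, (Tag.prt, true, a) ∈ P) ∧
         ∀ t ∈ D.rules, t.head = q →
           (∃ a ∈ t.ante, (Tag.prt, false, a) ∈ P) ∨ ¬ D.sup t s)

/-- A proof (derivation) is a finite sequence of tagged literals each of which
satisfies the proof condition relative to the preceding part of the sequence. -/
inductive ValidProof (D : DTheory) : List TLit → Prop
  | nil : ValidProof D []
  | snoc {P : List TLit} {t : Tag} {s : Bool} {q : Lit} :
      ValidProof D P → Cond D P t s q → ValidProof D (P ++ [(t, s, q)])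

/-- `D ⊢ ±# q`: some valid proof in `D` contains the tagged literal. -/
def Proves (D : DTheory) (t : Tag) (s : Bool) (q : Lit) : Prop :=
  ∃ P, ValidProof D P ∧ (t, s, q) ∈ P

/-- A theory is consistent iff it never defeasibly proves both a literal and
its complement. -/
def Consistent (D : DTheory) : Prop :=
  ∀ p : Lit, ¬ (Proves D .prt true p ∧ Proves D .prt true p.neg)

/-- `a` depends on `b` iff `b = a`, or for every rule for `a` either `b` is an
antecedent or some antecedent depends on `b` (least such relation,
impredicatively encoded). -/
def DependsOn (D : DTheory) (a b : Lit) : Prop :=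
  ∀ S : Lit → Lit → Prop,
    (∀ x, S x x) →
    (∀ x y, (∀ r ∈ D.rules, r.head = x → y ∈ r.ante ∨ ∃ c ∈ r.ante, S c y) → S x y) →
    S a b

/-- `p` is ∂-unreachable iff every rule for `p` either has two antecedents
depending on complementary literals or has a ∂-unreachable antecedent
(least such predicate, impredicatively encoded). -/
def Unreachable (D : DTheory) (p : Lit) : Prop :=
  ∀ S : Lit → Prop,
    (∀ x, (∀ r ∈ D.rules, r.head = x →
        (∃ l : Lit, ∃ a ∈ r.ante, ∃ b ∈ r.ante, DependsOn D a l ∧ DependsOn D b l.neg) ∨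
        ∃ d ∈ r.ante, S d) → S x) →
    S p

/-- The literal `p` appears in the theory `D` (its atom occurs in `D`). -/
def AppearsIn (p : Lit) (D : DTheory) : Prop :=
  (∃ l ∈ D.facts, l.atom = p.atom) ∨
  ∃ r ∈ D.rules, r.head.atom = p.atom ∨ ∃ l ∈ r.ante, l.atom = p.atom

/-- Positive part of the belief set of a defeasible theory. -/
def BSplus (D : DTheory) : Set Lit := {p | AppearsIn p D ∧ Proves D .prt true p}

/-- Negative part of the belief set of a defeasible theory. -/
def BSminus (D : DTheory) : Set Lit := {p | AppearsIn p D ∧ Proves D .prt false p}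

/-- The belief set of a defeasible theory. -/
def BS (D : DTheory) : Set Lit := BSplus D ∪ BSminus D

/-- Edge of the atom dependency graph: from atom `a` to atom `b` whenever some
rule has head with atom `b` and an antecedent literal with atom `a`. -/
def AtomEdge (D : DTheory) (a b : Atom) : Prop :=
  ∃ r ∈ D.rules, r.head.atom = b ∧ ∃ l ∈ r.ante, l.atom = a

/-- A theory is decisive iff every literal appearing in it is defeasibly
provable or defeasibly refuted. -/
def Decisive (D : DTheory) : Prop :=
  ∀ p : Lit, AppearsIn p D → Proves D .prt true p ∨ Proves D .prt false p

end DL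


namespace DL

/-- The rule set `R_Γ` of the Γ-transformation of a 3-SAT formula
`Γ = ∧ᵢ (aᵢ¹ ∨ aᵢ² ∨ aᵢ³)`, with fresh atoms `c i` and `p`. -/
def gammaRules (n : ℕ) (Γ : Fin n → Fin 3 → Lit) (c : Fin n → Atom) (p : Atom) :
    Finset Rule :=
  (Finset.univ.image fun ij : Fin n × Fin 3 => (⟨∅, Γ ij.1 ij.2⟩ : Rule)) ∪
  (Finset.univ.image fun ij : Fin n × Fin 3 =>
    (⟨{Γ ij.1 ij.2}, ⟨c ij.1, true⟩⟩ : Rule)) ∪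
  (Finset.univ.image fun i : Fin n => (⟨∅, ⟨c i, false⟩⟩ : Rule)) ∪
  (Finset.univ.image fun i : Fin n => (⟨{⟨c i, false⟩}, ⟨p, true⟩⟩ : Rule))

/-- Freshness of the atoms `c i` and `p` with respect to Γ. -/
def GammaFresh (n : ℕ) (Γ : Fin n → Fin 3 → Lit) (c : Fin n → Atom) (p : Atom) : Prop :=
  Function.Injective c ∧ (∀ i, c i ≠ p) ∧
  ∀ i j, (Γ i j).atom ≠ p ∧ ∀ k, (Γ i j).atom ≠ c k

/-- Satisfiability of the 3-SAT formula Γ. -/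
def GammaSat (n : ℕ) (Γ : Fin n → Fin 3 → Lit) : Prop :=
  ∃ I : Atom → Bool, ∀ i : Fin n, ∃ j : Fin 3, I (Γ i j).atom = (Γ i j).pos

end DL


namespace DL

open Classical

variable {D : DTheory}

lemma noDeltaTrue (hD : D.facts = ∅) {P : List TLit} (hP : ValidProof D P) :
    ∀ q : Lit, (Tag.delta, true, q) ∉ P := by
  induction hP with
  | nil => simp
  | @snoc P t s q hP hc ih =>
    intro q' hq'
    rcases List.mem_append.1 hq' with h | h
    · exact ih q' h
    · simp only [List.mem_singleton, Prod.mk.injEq] at h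
      obtain ⟨h1, h2, h3⟩ := h
      subst h1; subst h2; subst h3
      simp only [Cond, hD] at hc
      exact absurd hc (Finset.notMem_empty q')

lemma cond_mono {P P' : List TLit} (hsub : ∀ x ∈ P, x ∈ P')
    (hnd : ∀ q : Lit, (Tag.delta, true, q) ∉ P') {t : Tag} {s : Bool} {q : Lit}
    (h : Cond D P t s q) : Cond D P' t s q := by
  cases t <;> cases s <;> simp only [Cond] at h ⊢
  · exact h
  · exact h
  · exact ⟨hnd q, fun r hr hh => (h.2 r hr hh).imp fun a => And.imp_right fun ha => hsub _ ha⟩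
  · rcases h with h | ⟨r, hr, hh, ha⟩
    · exact Or.inl (hsub _ h)
    · exact Or.inr ⟨r, hr, hh, fun a ha' => hsub _ (ha a ha')⟩
  · refine ⟨hnd q, fun r hr hh => (h.2 r hr hh).imp
      (fun ⟨a, ha', hpa⟩ => ⟨a, ha', hsub _ hpa⟩)
      (fun ⟨s', hs', hh', ha, hsup⟩ => ⟨s', hs', hh', fun a ha' => hsub _ (ha a ha'), hsup⟩)⟩
  · rcases h with h | ⟨r, hr, hh, ha, hs⟩
    · exact Or.inl (hsub _ h)
    · exact Or.inr ⟨r, hr, hh, fun a ha' => hsub _ (ha a ha'),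
        fun s' hs' hh' => (hs s' hs' hh').imp
          (fun ⟨a, ha', hpa⟩ => ⟨a, ha', hsub _ hpa⟩) id⟩
  · exact ⟨hnd q, fun r hr hh => (h.2 r hr hh).imp fun a => And.imp_right fun ha => hsub _ ha⟩
  · rcases h with h | ⟨r, hr, hh, ha⟩
    · exact Or.inl (hsub _ h)
    · exact Or.inr ⟨r, hr, hh, fun a ha' => hsub _ (ha a ha')⟩
  · refine ⟨hnd q, fun r hr hh => (h.2 r hr hh).imp
      (fun ⟨a, ha', hpa⟩ => ⟨a, ha', hsub _ hpa⟩)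
      (fun ⟨s', hs', hh', ha⟩ => ⟨s', hs', hh', fun a ha' => hsub _ (ha a ha')⟩)⟩
  · rcases h with h | ⟨r, hr, hh, ha, hs⟩
    · exact Or.inl (hsub _ h)
    · exact Or.inr ⟨r, hr, hh, fun a ha' => hsub _ (ha a ha'),
        fun s' hs' hh' => (hs s' hs' hh').imp fun a => And.imp_right fun hp => hsub _ hp⟩
  · refine ⟨hnd q, ?_⟩
    rcases h.2 with h | h | ⟨s', hs', hh', ha, ht⟩
    · exact Or.inl (hsub _ h)
    · exact Or.inr (Or.inl fun r hr hh =>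
        (h r hr hh).imp fun a => And.imp_right fun ha => hsub _ ha)
    · exact Or.inr (Or.inr ⟨s', hs', hh', fun a ha' => hsub _ (ha a ha'),
        fun t' ht'' hh'' => (ht t' ht'' hh'').imp
          (fun ⟨a, ha', hpa⟩ => ⟨a, ha', hsub _ hpa⟩) id⟩)
  · rcases h with h | ⟨h0, ⟨r, hr, hh, ha⟩, hs⟩
    · exact Or.inl (hsub _ h)
    · refine Or.inr ⟨hsub _ h0, ⟨r, hr, hh, fun a ha' => hsub _ (ha a ha')⟩,
        fun s' hs' hh' => (hs s' hs' hh').imp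
          (fun ⟨a, ha', hpa⟩ => ⟨a, ha', hsub _ hpa⟩)
          (fun ⟨t', ht', hh'', ha'', hsup⟩ =>
            ⟨t', ht', hh'', fun a ha' => hsub _ (ha'' a ha'), hsup⟩)⟩

lemma valid_append (hD : D.facts = ∅) {P Q : List TLit} (hP : ValidProof D P)
    (hQ : ValidProof D Q) : ValidProof D (P ++ Q) := by
  induction hQ with
  | nil => simpa using hP
  | @snoc Q' t s q hQ' hc ih =>
    rw [← List.append_assoc]
    exact ValidProof.snoc ih
      (cond_mono (fun x hx => List.mem_append_right _ hx) (noDeltaTrue hD ih) hc)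

lemma exists_valid_forall (hD : D.facts = ∅) (S : Finset TLit)
    (h : ∀ x ∈ S, Proves D x.1 x.2.1 x.2.2) :
    ∃ P, ValidProof D P ∧ ∀ x ∈ S, x ∈ P := by
  classical
  induction S using Finset.induction with
  | empty => exact ⟨[], ValidProof.nil, by simp⟩
  | @insert x S hx ih =>
    obtain ⟨P0, hP0, hm0⟩ := ih fun y hy => h y (Finset.mem_insert_of_mem hy)
    obtain ⟨P1, hP1, hm1⟩ := h x (Finset.mem_insert_self x S)
    refine ⟨P1 ++ P0, valid_append hD hP1 hP0, fun y hy => ?_⟩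
    rcases Finset.mem_insert.1 hy with rfl | hy
    · exact List.mem_append_left _ hm1
    · exact List.mem_append_right _ (hm0 y hy)

lemma proves_prt_true (hD : D.facts = ∅) {q : Lit}
    (h1 : ∃ r ∈ D.rules, r.head = q ∧ ∀ a ∈ r.ante, Proves D .prt true a)
    (h2 : ∀ s ∈ D.rules, s.head = q.neg →
      (∃ a ∈ s.ante, Proves D .prt false a) ∨
      ∃ t ∈ D.rules, t.head = q ∧ (∀ a ∈ t.ante, Proves D .prt true a) ∧ D.sup t s) :
    Proves D .prt true q := by
  classical
  set A : Finset Lit := D.rules.biUnion Rule.ante with hA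
  set F : Finset TLit :=
    A.image (fun a => (Tag.prt, true, a)) ∪ A.image (fun a => (Tag.prt, false, a)) with hF
  set S : Finset TLit := F.filter (fun x => Proves D x.1 x.2.1 x.2.2) with hS
  obtain ⟨P, hP, hm⟩ := exists_valid_forall hD S fun x hx => (Finset.mem_filter.1 hx).2
  have hPd : ValidProof D (P ++ [(Tag.delta, false, q.neg)]) :=
    hP.snoc (by simp [Cond, hD])
  have key : ∀ (b : Bool) (r : Rule), r ∈ D.rules → ∀ a ∈ r.ante,
      Proves D .prt b a → (Tag.prt, b, a) ∈ P ++ [(Tag.delta, false, q.neg)] := by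
    intro b r hr a ha hpr
    apply List.mem_append_left
    apply hm
    rw [hS, Finset.mem_filter]
    refine ⟨?_, hpr⟩
    have hmA : a ∈ A := Finset.mem_biUnion.2 ⟨r, hr, ha⟩
    cases b
    · exact Finset.mem_union_right _ (Finset.mem_image.2 ⟨a, hmA, rfl⟩)
    · exact Finset.mem_union_left _ (Finset.mem_image.2 ⟨a, hmA, rfl⟩)
  refine ⟨(P ++ [(Tag.delta, false, q.neg)]) ++ [(Tag.prt, true, q)],
    hPd.snoc ?_, by simp⟩
  refine Or.inr ⟨by simp, ?_, ?_⟩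
  · obtain ⟨r, hr, hh, ha⟩ := h1
    exact ⟨r, hr, hh, fun a ha' => key true r hr a ha' (ha a ha')⟩
  · intro s hs hhs
    rcases h2 s hs hhs with ⟨a, ha, hpa⟩ | ⟨t, ht, hht, hta, hsup⟩
    · exact Or.inl ⟨a, ha, key false s hs a ha hpa⟩
    · exact Or.inr ⟨t, ht, hht, fun a ha' => key true t ht a ha' (hta a ha'), hsup⟩

lemma proves_prt_false (hD : D.facts = ∅) {q : Lit}
    (h : (∀ r ∈ D.rules, r.head = q → ∃ a ∈ r.ante, Proves D .prt false a) ∨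
      ∃ s ∈ D.rules, s.head = q.neg ∧ (∀ a ∈ s.ante, Proves D .prt true a) ∧
        ∀ t ∈ D.rules, t.head = q →
          (∃ a ∈ t.ante, Proves D .prt false a) ∨ ¬ D.sup t s) :
    Proves D .prt false q := by
  classical
  set A : Finset Lit := D.rules.biUnion Rule.ante with hA
  set F : Finset TLit :=
    A.image (fun a => (Tag.prt, true, a)) ∪ A.image (fun a => (Tag.prt, false, a)) with hF
  set S : Finset TLit := F.filter (fun x => Proves D x.1 x.2.1 x.2.2) with hS
  obtain ⟨P, hP, hm⟩ := exists_valid_forall hD S fun x hx => (Finset.mem_filter.1 hx).2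
  have key : ∀ (b : Bool) (r : Rule), r ∈ D.rules → ∀ a ∈ r.ante,
      Proves D .prt b a → (Tag.prt, b, a) ∈ P := by
    intro b r hr a ha hpr
    apply hm
    rw [hS, Finset.mem_filter]
    refine ⟨?_, hpr⟩
    have hmA : a ∈ A := Finset.mem_biUnion.2 ⟨r, hr, ha⟩
    cases b
    · exact Finset.mem_union_right _ (Finset.mem_image.2 ⟨a, hmA, rfl⟩)
    · exact Finset.mem_union_left _ (Finset.mem_image.2 ⟨a, hmA, rfl⟩)
  refine ⟨P ++ [(Tag.prt, false, q)], hP.snoc ?_, by simp⟩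
  refine ⟨noDeltaTrue hD hP q, ?_⟩
  rcases h with h | ⟨s, hs, hhs, ha, ht⟩
  · refine Or.inr (Or.inl fun r hr hh => ?_)
    obtain ⟨a, ha', hpa⟩ := h r hr hh
    exact ⟨a, ha', key false r hr a ha' hpa⟩
  · refine Or.inr (Or.inr ⟨s, hs, hhs, fun a ha' => key true s hs a ha' (ha a ha'), ?_⟩)
    intro t ht' hh'
    rcases ht t ht' hh' with ⟨a, ha', hpa⟩ | hns
    · exact Or.inl ⟨a, ha', key false t ht' a ha' hpa⟩
    · exact Or.inr hns

def Decided (D : DTheory) (q : Lit) : Prop :=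
  Proves D .prt true q ∨ Proves D .prt false q

lemma decided_of_ante (hD : D.facts = ∅) {q : Lit}
    (hante : ∀ r ∈ D.rules, (r.head = q ∨ r.head = q.neg) → ∀ a ∈ r.ante, Decided D a) :
    Decided D q := by
  classical
  by_cases hA : ∃ r ∈ D.rules, r.head = q ∧ ∀ a ∈ r.ante, Proves D .prt true a
  · by_cases hB : ∀ s ∈ D.rules, s.head = q.neg →
        (∃ a ∈ s.ante, Proves D .prt false a) ∨
        ∃ t ∈ D.rules, t.head = q ∧ (∀ a ∈ t.ante, Proves D .prt true a) ∧ D.sup t s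
    · exact Or.inl (proves_prt_true hD hA hB)
    · push_neg at hB
      obtain ⟨s, hs, hhs, hB1, hB2⟩ := hB
      refine Or.inr (proves_prt_false hD (Or.inr ⟨s, hs, hhs, ?_, ?_⟩))
      · intro a ha'
        rcases hante s hs (Or.inr hhs) a ha' with h | h
        · exact h
        · exact absurd h (hB1 a ha')
      · intro t ht hh
        by_cases hta : ∀ a ∈ t.ante, Proves D .prt true a
        · exact Or.inr (hB2 t ht hh hta)
        · push_neg at hta
          obtain ⟨a, ha', hna⟩ := hta
          rcases hante t ht (Or.inl hh) a ha' with h | h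
          · exact absurd h hna
          · exact Or.inl ⟨a, ha', h⟩
  · push_neg at hA
    refine Or.inr (proves_prt_false hD (Or.inl fun r hr hh => ?_))
    obtain ⟨a, ha', hna⟩ := hA r hr hh
    rcases hante r hr (Or.inl hh) a ha' with h | h
    · exact absurd h hna
    · exact ⟨a, ha', h⟩

end DL


namespace DL

variable {n : ℕ} {Γ : Fin n → Fin 3 → Lit} {c : Fin n → Atom} {p : Atom}

lemma mem_gammaRules {r : Rule} :
    r ∈ gammaRules n Γ c p ↔
      (∃ i j, r = ⟨∅, Γ i j⟩) ∨ (∃ i j, r = ⟨{Γ i j}, ⟨c i, true⟩⟩) ∨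
      (∃ i, r = ⟨∅, ⟨c i, false⟩⟩) ∨ (∃ i, r = ⟨{⟨c i, false⟩}, ⟨p, true⟩⟩) := by
  simp only [gammaRules, Finset.mem_union, Finset.mem_image, Finset.mem_univ, true_and,
    Prod.exists, or_assoc]
  constructor
  · rintro (⟨i, j, h⟩ | ⟨i, j, h⟩ | ⟨i, h⟩ | ⟨i, h⟩)
    · exact Or.inl ⟨i, j, h.symm⟩
    · exact Or.inr (Or.inl ⟨i, j, h.symm⟩)
    · exact Or.inr (Or.inr (Or.inl ⟨i, h.symm⟩))
    · exact Or.inr (Or.inr (Or.inr ⟨i, h.symm⟩))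
  · rintro (⟨i, j, h⟩ | ⟨i, j, h⟩ | ⟨i, h⟩ | ⟨i, h⟩)
    · exact Or.inl ⟨i, j, h.symm⟩
    · exact Or.inr (Or.inl ⟨i, j, h.symm⟩)
    · exact Or.inr (Or.inr (Or.inl ⟨i, h.symm⟩))
    · exact Or.inr (Or.inr (Or.inr ⟨i, h.symm⟩))

-- Rank of an atom in the Γ-transformation: Γ-atoms `0`, the `c i` `1`, `p` `2`.
open Classical in
noncomputable def rank (c : Fin n → Atom) (p : Atom) (a : Atom) : ℕ :=
  if a = p then 2 else if ∃ i, a = c i then 1 else 0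

open Classical in
lemma rank_p : rank c p p = 2 := by rw [rank, if_pos rfl]

open Classical in
lemma rank_c (hcp : ∀ i, c i ≠ p) (i : Fin n) : rank c p (c i) = 1 := by
  rw [rank, if_neg (hcp i), if_pos ⟨i, rfl⟩]

open Classical in
lemma rank_G (hG : ∀ (i : Fin n) (j : Fin 3), (Γ i j).atom ≠ p ∧ ∀ k, (Γ i j).atom ≠ c k)
    (i : Fin n) (j : Fin 3) : rank c p (Γ i j).atom = 0 := by
  rw [rank, if_neg (hG i j).1, if_neg]
  push_neg
  exact fun k => (hG i j).2 k

lemma rank_lt (hf : GammaFresh n Γ c p) {r : Rule} (hr : r ∈ gammaRules n Γ c p)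
    {a : Lit} (ha : a ∈ r.ante) : rank c p a.atom < rank c p r.head.atom := by
  classical
  obtain ⟨hinj, hcp, hΓ⟩ := hf
  rcases mem_gammaRules.1 hr with ⟨i, j, rfl⟩ | ⟨i, j, rfl⟩ | ⟨i, rfl⟩ | ⟨i, rfl⟩
  · simp at ha
  · simp only [Finset.mem_singleton] at ha
    subst ha
    show rank c p (Γ i j).atom < rank c p (c i)
    rw [rank_G hΓ, rank_c hcp]
    norm_num
  · simp at ha
  · simp only [Finset.mem_singleton] at ha
    subst ha
    show rank c p (c i) < rank c p p
    rw [rank_c hcp, rank_p]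
    norm_num

end DL

open DL in
/-- Every defeasible theory based on `R_Γ` has an acyclic atom dependency graph
and is decisive. -/
theorem stmt6 (n : ℕ) (Γ : Fin n → Fin 3 → Lit) (c : Fin n → Atom) (p : Atom)
    (hf : GammaFresh n Γ c p) (sup : Rule → Rule → Prop)
    (hwf : (⟨∅, gammaRules n Γ c p, sup⟩ : DTheory).WellFormed) :
    Irreflexive (Relation.TransGen (AtomEdge ⟨∅, gammaRules n Γ c p, sup⟩)) ∧
    Decisive ⟨∅, gammaRules n Γ c p, sup⟩ := by
  classical
  have hD : (⟨∅, gammaRules n Γ c p, sup⟩ : DTheory).facts = ∅ := rfl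
  have hlt : ∀ a b, AtomEdge ⟨∅, gammaRules n Γ c p, sup⟩ a b →
      rank c p a < rank c p b := by
    rintro a b ⟨r, hr, hhead, l, hl, rfl⟩
    rw [← hhead]
    exact rank_lt hf hr hl
  constructor
  · have key : ∀ x y, Relation.TransGen (AtomEdge ⟨∅, gammaRules n Γ c p, sup⟩) x y →
        rank c p x < rank c p y := by
      intro x y h
      induction h with
      | single h' => exact hlt _ _ h'
      | tail _ h' ih => exact ih.trans (hlt _ _ h')
    intro a h
    exact absurd (key a a h) (lt_irrefl _)
  · have decAll : ∀ k, ∀ q : Lit, rank c p q.atom < k →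
        Decided ⟨∅, gammaRules n Γ c p, sup⟩ q := by
      intro k
      induction k with
      | zero => intro q h; omega
      | succ k ih =>
        intro q hq
        refine decided_of_ante hD ?_
        intro r hr hhead a ha
        apply ih
        have h1 := rank_lt hf hr ha
        have h2 : r.head.atom = q.atom := by
          rcases hhead with h | h <;> rw [h] <;> rfl
        rw [h2] at h1
        omega
    intro q _
    exact decAll (rank c p q.atom + 1) q (Nat.lt_succ_self _)
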